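/- Let M be symplectic, G = ∇f_M M^TM + J_{2n}M(∇f_M)^TJ_{2n}M, and for X in the tangent space T_M Sp(2n,R) define g_M(X_1,X_2) := (1/2)tr((X_1M^+)^T X_2 M^+). Then for all X in T_M Sp(2n,R): g_M(G, X) = tr((∇f_M)^T X). -/
import Mathlib


open Matrix

noncomputable section

/-- The standard symplectic matrix `J = [[0, I],[-I, 0]]` of size `2m`. -/
def Jmat (m : ℕ) : Matrix (Fin m ⊕ Fin m) (Fin m ⊕ Fin m) ℝ :=
  Matrix.fromBlocks 0 1 (-1) 0

/-- The symplectic inverse `A⁺ = J₂ₖᵀ Aᵀ J₂ₙ` of a `2n × 2k` real matrix. -/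
def sympInv {n k : ℕ} (A : Matrix (Fin n ⊕ Fin n) (Fin k ⊕ Fin k) ℝ) :
    Matrix (Fin k ⊕ Fin k) (Fin n ⊕ Fin n) ℝ :=
  (Jmat k)ᵀ * Aᵀ * Jmat n

lemma JT (m : ℕ) : (Jmat m)ᵀ = -(Jmat m) := by
  ext (i | i) (j | j) <;>
    simp [Jmat, Matrix.fromBlocks, Matrix.one_apply, eq_comm]

lemma JJ (m : ℕ) : Jmat m * Jmat m = -1 := by
  simp only [Jmat, Matrix.fromBlocks_multiply]
  ext (i | i) (j | j) <;>
    simp [Matrix.fromBlocks, Matrix.one_apply]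

theorem stmt_17 (n : ℕ) (M G gradf : Matrix (Fin n ⊕ Fin n) (Fin n ⊕ Fin n) ℝ)
    (hM : sympInv M * M = 1)
    (hG : G = gradf * Mᵀ * M + Jmat n * M * gradfᵀ * Jmat n * M) :
    ∀ Ω : Matrix (Fin n ⊕ Fin n) (Fin n ⊕ Fin n) ℝ, sympInv Ω = -Ω →
      (1/2 : ℝ) * ((G * sympInv M)ᵀ * (M * Ω * sympInv M)).trace
        = (gradfᵀ * (M * Ω)).trace := by
  intro Ω hΩ
  obtain ⟨J, hJ⟩ : ∃ J, Jmat n = J := ⟨_, rfl⟩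
  have hJT : Jᵀ = -J := by rw [← hJ]; exact JT n
  have hJJ : J * J = -1 := by rw [← hJ]; exact JJ n
  have hsymp : ∀ A : Matrix (Fin n ⊕ Fin n) (Fin n ⊕ Fin n) ℝ,
      sympInv A = Jᵀ * Aᵀ * J := fun A => by rw [← hJ]; rfl
  rw [hsymp] at hM hΩ
  rw [hJ] at hG
  rw [hsymp]
  have hMM : M * (Jᵀ * Mᵀ * J) = 1 := mul_eq_one_comm.mp hM
  set P := Jᵀ * Mᵀ * J with hP
  -- Mᵀ * J * M = J
  have hMJM : Mᵀ * J * M = J := by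
    have h2 : J * (P * M) = J := by rw [hM, mul_one]
    calc Mᵀ * J * M = (J * Jᵀ) * (Mᵀ * J * M) := by
          rw [hJT, mul_neg, hJJ]; simp
      _ = J * (P * M) := by rw [hP, hJT]; noncomm_ring
      _ = J := h2
  -- J * Ω * J = Ωᵀ
  have hΩJ : J * Ω * J = Ωᵀ := by
    rw [hJT] at hΩ
    have h2 : J * Ωᵀ * J = Ω := by
      have : -(J * Ωᵀ * J) = -Ω := by rw [← hΩ]; noncomm_ring
      exact neg_inj.mp this
    calc J * Ω * J = J * (J * Ωᵀ * J) * J := by rw [h2]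
      _ = (J * J) * Ωᵀ * (J * J) := by noncomm_ring
      _ = Ωᵀ := by rw [hJJ]; simp
  -- P * J = J * Mᵀ
  have hMJ : P * J = J * Mᵀ := by
    rw [hP, hJT]
    calc -J * Mᵀ * J * J = -(J * Mᵀ * (J * J)) := by noncomm_ring
      _ = J * Mᵀ := by rw [hJJ]; simp
  -- G * P
  have hGM : G * P = gradf * Mᵀ + J * M * gradfᵀ * J := by
    rw [hG]
    calc (gradf * Mᵀ * M + J * M * gradfᵀ * J * M) * P
        = gradf * Mᵀ * (M * P) + J * M * gradfᵀ * J * (M * P) := by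
          noncomm_ring
      _ = gradf * Mᵀ + J * M * gradfᵀ * J := by rw [hMM]; simp
  rw [hGM]
  have ht1 : ((gradf * Mᵀ)ᵀ * (M * Ω * P)).trace = (gradfᵀ * (M * Ω)).trace := by
    rw [Matrix.transpose_mul, Matrix.transpose_transpose, Matrix.trace_mul_comm]
    rw [show M * Ω * P * (M * gradfᵀ) = M * Ω * (P * M) * gradfᵀ by
      noncomm_ring, hM]
    rw [Matrix.trace_mul_comm]
    simp [Matrix.mul_assoc]
  have ht2 : ((J * M * gradfᵀ * J)ᵀ * (M * Ω * P)).trace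
      = (gradfᵀ * (M * Ω)).trace := by
    have hT : (J * M * gradfᵀ * J)ᵀ = J * gradf * Mᵀ * J := by
      simp only [Matrix.transpose_mul, Matrix.transpose_transpose, hJT]
      noncomm_ring
    rw [hT]
    have key : J * gradf * Mᵀ * J * (M * Ω * P)
        = J * gradf * (J * (Ω * P)) := by
      rw [show J * gradf * Mᵀ * J * (M * Ω * P)
          = J * gradf * (Mᵀ * J * M) * Ω * P by noncomm_ring, hMJM]
      noncomm_ring
    rw [key, Matrix.trace_mul_comm]
    rw [show J * (Ω * P) * (J * gradf) = J * Ω * (P * J) * gradf by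
      noncomm_ring, hMJ]
    rw [show J * Ω * (J * Mᵀ) * gradf = (J * Ω * J) * Mᵀ * gradf by noncomm_ring, hΩJ]
    rw [show Ωᵀ * Mᵀ * gradf = (gradfᵀ * (M * Ω))ᵀ by
      simp only [Matrix.transpose_mul, Matrix.transpose_transpose],
      Matrix.trace_transpose]
  rw [Matrix.transpose_add, Matrix.add_mul, Matrix.trace_add, ht1, ht2]
  ring
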